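/- arXiv:2109.13594 — 2 statements merged into one kernel-verified Lean document; each statement's English description precedes it below -/
import Mathlib

section
/- Every multiqubit Kochen–Specker set necessarily contains an entangled ray. Precisely: for every n ≥ 1 and every set S of product unit vectors in (ℂ²)^{⊗n}, there exists a KS-colouring of S; consequently, no set of unit vectors consisting entirely of product vectors can be a KS set, so any KS set in (ℂ²)^{⊗n} contains at least one non-product (entangled) vector. -/
open scoped InnerProductSpace
open MeasureTheory

noncomputable section

abbrev Qubit : Type := EuclideanSpace ℂ (Fin 2)
abbrev NQubit (n : ℕ) : Type := EuclideanSpace ℂ (Fin n → Fin 2)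

/-- The product vector `ψ₁ ⊗ ⋯ ⊗ ψₙ` in `(ℂ²)^{⊗n}`, modelled concretely as
`EuclideanSpace ℂ (Fin n → Fin 2)`; its inner products satisfy
`⟨tens ψ, tens χ⟩ = ∏ j, ⟨ψ j, χ j⟩`. -/
noncomputable def tens {n : ℕ} (ψ : Fin n → Qubit) : NQubit n :=
  WithLp.toLp 2 (fun f => ∏ j, ψ j (f j))

/-- A vector of `(ℂ²)^{⊗n}` is a product vector if it is of the form `ψ₁ ⊗ ⋯ ⊗ ψₙ`. -/
def IsProduct {n : ℕ} (v : NQubit n) : Prop := ∃ ψ : Fin n → Qubit, v = tens ψ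

/-- A finite set of vectors forming an orthonormal basis of `H`. -/
def IsONBasis {H : Type*} [NormedAddCommGroup H] [InnerProductSpace ℂ H]
    (B : Finset H) : Prop :=
  Orthonormal ℂ (fun v : B => (v : H)) ∧ Submodule.span ℂ (B : Set H) = ⊤

/-- A KS-colouring of a set `S` of unit vectors: a `{0,1}`-valued map (modelled as a
predicate, `c v` meaning value `1`) such that every orthonormal basis contained in `S`
has exactly one element of value `1`, and no two mutually orthogonal elements of `S`
both have value `1`. -/
def IsKSColouring {H : Type*} [NormedAddCommGroup H] [InnerProductSpace ℂ H]
    (S : Set H) (c : H → Prop) : Prop :=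
  (∀ B : Finset H, ↑B ⊆ S → IsONBasis B → ∃! v, v ∈ B ∧ c v) ∧
  (∀ ψ ∈ S, ∀ χ ∈ S, ⟪ψ, χ⟫_ℂ = 0 → ¬(c ψ ∧ c χ))

namespace KSAux

/-- tie-break predicate on ℂ: "positive" half of ℂ \ {0} under z ↦ -z. -/
def T (z : ℂ) : Prop := 0 < z.im ∨ (z.im = 0 ∧ 0 < z.re)

lemma T_flip {z : ℂ} (hz : z ≠ 0) {r : ℝ} (hr : 0 < r) :
    T (-(r : ℂ) * z) ↔ ¬ T z := by
  have him : (-(r : ℂ) * z).im = -(r * z.im) := by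
    simp [Complex.mul_im]
  have hre : (-(r : ℂ) * z).re = -(r * z.re) := by
    simp [Complex.mul_re]
  have hz' : ¬(z.re = 0 ∧ z.im = 0) := by
    intro ⟨h1, h2⟩; exact hz (Complex.ext h1 h2)
  unfold T
  rw [him, hre]
  rcases lt_trichotomy z.im 0 with h | h | h
  · constructor
    · intro _ hT
      rcases hT with h' | ⟨h', _⟩ <;> linarith
    · intro _; left; nlinarith
  · have hre' : z.re ≠ 0 := fun h0 => hz' ⟨h0, h⟩
    rcases lt_trichotomy z.re 0 with h2 | h2 | h2
    · constructor
      · intro _ hT; rcases hT with h' | ⟨_, h'⟩ <;> linarith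
      · intro _; right; constructor <;> nlinarith
    · exact absurd h2 hre'
    · constructor
      · intro hT _
        rcases hT with h' | ⟨_, h'⟩ <;> nlinarith
      · intro hn; exact absurd (Or.inr ⟨h, h2⟩) hn
  · constructor
    · intro hT _
      rcases hT with h' | ⟨h', _⟩ <;> nlinarith
    · intro hn; exact absurd (Or.inl h) hn

/-- a fixed "colouring" of the qubit rays, picking exactly one ray of each
orthogonal pair. -/
def q (ψ : Qubit) : Prop :=
  ‖ψ 1‖ < ‖ψ 0‖ ∨
    (‖ψ 0‖ = ‖ψ 1‖ ∧ T ((starRingEnd ℂ) (ψ 0) * ψ 1))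

lemma qubit_ne_zero_iff {ψ : Qubit} : ψ ≠ 0 ↔ ψ 0 ≠ 0 ∨ ψ 1 ≠ 0 := by
  constructor
  · intro h
    by_contra hc
    push_neg at hc
    apply h
    ext i
    fin_cases i
    · exact hc.1
    · exact hc.2
  · rintro (h | h) h0 <;> [exact h (by rw [h0]; rfl); exact h (by rw [h0]; rfl)]

lemma inner_qubit (ψ χ : Qubit) :
    ⟪ψ, χ⟫_ℂ = (starRingEnd ℂ) (ψ 0) * χ 0 + (starRingEnd ℂ) (ψ 1) * χ 1 := by
  simp [PiLp.inner_apply, RCLike.inner_apply, Fin.sum_univ_two]; ring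

/-- orthogonal complement representation in ℂ². -/
lemma exists_rep {ψ χ : Qubit} (hψ : ψ ≠ 0) (hχ : χ ≠ 0) (h : ⟪ψ, χ⟫_ℂ = 0) :
    ∃ a : ℂ, a ≠ 0 ∧ χ 0 = -a * (starRingEnd ℂ) (ψ 1) ∧ χ 1 = a * (starRingEnd ℂ) (ψ 0) := by
  rw [inner_qubit] at h
  set p0 := ψ 0 with hp0; set p1 := ψ 1 with hp1
  set c0 := χ 0 with hc0; set c1 := χ 1 with hc1
  by_cases h0 : p0 = 0
  · have h1 : p1 ≠ 0 := by
      rcases qubit_ne_zero_iff.mp hψ with h' | h'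
      · exact absurd h0 h'
      · exact h'
    have hc1' : c1 = 0 := by
      have : (starRingEnd ℂ) p1 * c1 = 0 := by rw [h0] at h; simpa using h
      rcases mul_eq_zero.mp this with h' | h'
      · exact absurd h' (by simpa using h1)
      · exact h'
    have hc0' : c0 ≠ 0 := by
      rcases qubit_ne_zero_iff.mp hχ with h' | h'
      · exact h'
      · exact absurd hc1' h'
    refine ⟨-c0 / (starRingEnd ℂ) p1, ?_, ?_, ?_⟩
    · simp [div_eq_zero_iff, hc0', h1]
    · rw [neg_div, neg_neg, div_mul_cancel₀ c0 (show (starRingEnd ℂ) p1 ≠ 0 by simpa using h1)]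
    · simp [hc1', h0]
  · refine ⟨c1 / (starRingEnd ℂ) p0, ?_, ?_, ?_⟩
    · intro hA
      rcases div_eq_zero_iff.mp hA with h' | h'
      · -- c1 = 0 forces c0 = 0
        have hcc : (starRingEnd ℂ) p0 * c0 = 0 := by rw [h'] at h; simpa using h
        rcases mul_eq_zero.mp hcc with h'' | h''
        · exact h0 (by simpa using h'')
        · rcases qubit_ne_zero_iff.mp hχ with h3 | h3
          · exact h3 h''
          · exact h3 h'
      · exact h0 (by simpa using h')
    · have hp0' : (starRingEnd ℂ) p0 ≠ 0 := by simpa using h0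
      have key : (starRingEnd ℂ) p0 * c0 = -((starRingEnd ℂ) p1 * c1) := by
        linear_combination h
      rw [neg_mul, div_mul_eq_mul_div, ← neg_div, eq_div_iff hp0']
      linear_combination key
    · rw [div_mul_eq_mul_div, mul_div_cancel_right₀ c1 (by simpa using h0 : (starRingEnd ℂ) p0 ≠ 0)]

/-- key dichotomy: orthogonal nonzero qubit vectors get opposite colours. -/
lemma q_flip {ψ χ : Qubit} (hψ : ψ ≠ 0) (hχ : χ ≠ 0) (h : ⟪ψ, χ⟫_ℂ = 0) :
    q ψ ↔ ¬ q χ := by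
  obtain ⟨a, ha, ha0, ha1⟩ := exists_rep hψ hχ h
  have habsa : 0 < ‖a‖ := norm_pos_iff.mpr ha
  have habs0 : ‖χ 0‖ = ‖a‖ * ‖ψ 1‖ := by
    rw [ha0]; simp [norm_mul, Complex.norm_conj]
  have habs1 : ‖χ 1‖ = ‖a‖ * ‖ψ 0‖ := by
    rw [ha1]; simp [norm_mul, Complex.norm_conj]
  have hg : (starRingEnd ℂ) (χ 0) * χ 1
      = -((Complex.normSq a : ℝ) : ℂ) * ((starRingEnd ℂ) (ψ 0) * ψ 1) := by
    rw [ha0, ha1, neg_mul, map_neg, map_mul, Complex.conj_conj, ← Complex.mul_conj]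
    ring
  rcases lt_trichotomy (‖ψ 0‖) (‖ψ 1‖) with hlt | heq | hgt
  · -- q ψ false, q χ true
    have hqχ : q χ := Or.inl (by rw [habs0, habs1]; exact mul_lt_mul_of_pos_left hlt habsa)
    have hqψ : ¬ q ψ := by
      rintro (h' | ⟨h', _⟩)
      · exact absurd hlt (asymm h')
      · exact absurd h' (ne_of_gt hlt).symm
    exact iff_of_false hqψ (not_not_intro hqχ)
  · -- tie-break case
    have hne0 : ‖ψ 0‖ ≠ 0 := by
      intro h0
      have h1 : ‖ψ 1‖ = 0 := by rw [← heq]; exact h0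
      exact qubit_ne_zero_iff.mp hψ |>.elim
        (fun hh => hh (norm_eq_zero.mp h0))
        (fun hh => hh (norm_eq_zero.mp h1))
    have hgψ : (starRingEnd ℂ) (ψ 0) * ψ 1 ≠ 0 := by
      apply mul_ne_zero
      · simpa using fun hh => hne0 (by rw [hh]; simp)
      · intro hh; exact hne0 (by rw [heq, hh]; simp)
    have hr : 0 < Complex.normSq a := Complex.normSq_pos.mpr ha
    have hψiff : q ψ ↔ T ((starRingEnd ℂ) (ψ 0) * ψ 1) := by
      unfold q
      rw [heq]
      simp [lt_irrefl]
    have hχiff : q χ ↔ T ((starRingEnd ℂ) (χ 0) * χ 1) := by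
      have hceq : ‖χ 0‖ = ‖χ 1‖ := by
        rw [habs0, habs1, heq]
      unfold q
      rw [hceq]
      simp [lt_irrefl]
    rw [hψiff, hχiff, hg, T_flip hgψ hr, not_not]
  · -- q ψ true, q χ false
    have hqψ : q ψ := Or.inl hgt
    have hqχ : ¬ q χ := by
      have : ‖χ 1‖ > ‖χ 0‖ := by
        rw [habs0, habs1]; exact mul_lt_mul_of_pos_left hgt habsa
      rintro (h' | ⟨h', _⟩)
      · exact absurd this (asymm h')
      · exact absurd h' (ne_of_lt this)
    exact iff_of_true hqψ hqχ


lemma inner_tens {n : ℕ} (ψ χ : Fin n → Qubit) :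
    ⟪tens ψ, tens χ⟫_ℂ = ∏ j, ⟪ψ j, χ j⟫_ℂ := by
  have h1 : ⟪tens ψ, tens χ⟫_ℂ
      = ∑ f : Fin n → Fin 2, ∏ j, ((starRingEnd ℂ) (ψ j (f j)) * χ j (f j)) := by
    simp only [PiLp.inner_apply, RCLike.inner_apply, tens, map_prod, PiLp.toLp_apply]
    exact Finset.sum_congr rfl fun f _ => by rw [Finset.prod_mul_distrib]; ring
  rw [h1]
  rw [← Fintype.prod_sum fun j i => (starRingEnd ℂ) (ψ j i) * χ j i]
  exact Finset.prod_congr rfl fun j _ => by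
    simp [PiLp.inner_apply, RCLike.inner_apply]; ring

lemma factors_ne_zero {n : ℕ} {ψ : Fin n → Qubit} (h : ‖tens ψ‖ = 1) (j : Fin n) :
    ψ j ≠ 0 := by
  have h2 : ⟪tens ψ, tens ψ⟫_ℂ = 1 := by
    rw [inner_self_eq_norm_sq_to_K, h]; norm_num
  rw [inner_tens] at h2
  intro hj
  have : ⟪ψ j, ψ j⟫_ℂ = 0 := by rw [hj]; simp
  have := Finset.prod_eq_zero (f := fun j => ⟪ψ j, ψ j⟫_ℂ) (Finset.mem_univ j) this
  rw [h2] at this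
  exact one_ne_zero this

lemma card_of_isONBasis {n : ℕ} {B : Finset (NQubit n)} (hB : IsONBasis B) :
    B.card = 2 ^ n := by
  obtain ⟨ho, hsp⟩ := hB
  let b : Module.Basis B ℂ (NQubit n) :=
    Module.Basis.mk ho.linearIndependent (by
      have hr : (Set.range fun v : B => (v : NQubit n)) = (B : Set (NQubit n)) :=
        Subtype.range_coe
      rw [hr, hsp])
  have h1 := Module.finrank_eq_card_basis b
  have h2 : Module.finrank ℂ (NQubit n) = 2 ^ n := by
    rw [finrank_euclideanSpace]
    simp [Fintype.card_fun]
  rw [h2, Fintype.card_coe] at h1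
  exact h1.symm

/-- the colouring -/
def col {n : ℕ} (v : NQubit n) : Prop :=
  ∃ ψ : Fin n → Qubit, v = tens ψ ∧ ∀ j, q (ψ j)

lemma not_both {n : ℕ} {v w : NQubit n} (hv : ‖v‖ = 1) (hw : ‖w‖ = 1)
    (h : ⟪v, w⟫_ℂ = 0) (hcv : col v) (hcw : col w) : False := by
  obtain ⟨ψ, rfl, hqψ⟩ := hcv
  obtain ⟨χ, rfl, hqχ⟩ := hcw
  rw [inner_tens] at h
  obtain ⟨j, -, hj⟩ := Finset.prod_eq_zero_iff.mp h
  exact ((q_flip (factors_ne_zero hv j) (factors_ne_zero hw j) hj).mp (hqψ j)) (hqχ j)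

theorem main (n : ℕ) :
    ∀ S : Set (NQubit n), (∀ v ∈ S, IsProduct v ∧ ‖v‖ = 1) →
      ∃ c : NQubit n → Prop, IsKSColouring S c := by
  classical
  intro S hS
  refine ⟨col, ?_, ?_⟩
  · intro B hBS hONB
    have hunit : ∀ v : B, ‖(v : NQubit n)‖ = 1 := fun v => (hS v (hBS v.2)).2
    have hprod : ∀ v : B, ∃ ψ : Fin n → Qubit, (v : NQubit n) = tens ψ :=
      fun v => (hS v (hBS v.2)).1
    choose rep hrep using hprod
    have hrepu : ∀ v : B, ‖tens (rep v)‖ = 1 := fun v => (hrep v) ▸ hunit v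
    -- the sign pattern map
    set s : B → (Fin n → Bool) := fun v j => decide (q (rep v j)) with hs
    have hinj : Function.Injective s := by
      intro v w hvw
      by_contra hne
      have horth : ⟪(v : NQubit n), (w : NQubit n)⟫_ℂ = 0 := by
        have := (orthonormal_iff_ite.mp hONB.1) v w
        rw [if_neg hne] at this
        exact this
      rw [hrep v, hrep w, inner_tens] at horth
      obtain ⟨j, -, hj⟩ := Finset.prod_eq_zero_iff.mp horth
      have hflip := q_flip (factors_ne_zero (hrepu v) j) (factors_ne_zero (hrepu w) j) hj
      have : s v j = s w j := congrFun hvw j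
      rw [hs] at this
      simp only [decide_eq_decide] at this
      tauto
    have hcard : Fintype.card B = Fintype.card (Fin n → Bool) := by
      rw [Fintype.card_coe, card_of_isONBasis hONB, Fintype.card_fun]
      simp
    have hsurj : Function.Surjective s :=
      ((Fintype.bijective_iff_injective_and_card s).mpr ⟨hinj, hcard⟩).2
    obtain ⟨v, hv⟩ := hsurj (fun _ => true)
    have hqv : ∀ j, q (rep v j) := by
      intro j
      have := congrFun hv j
      rw [hs] at this
      simpa using this
    refine ⟨(v : NQubit n), ⟨v.2, rep v, hrep v, hqv⟩, ?_⟩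
    rintro w ⟨hwB, hcw⟩
    by_contra hne
    have horth : ⟪w, (v : NQubit n)⟫_ℂ = 0 := by
      have := (orthonormal_iff_ite.mp hONB.1) ⟨w, hwB⟩ v
      rw [if_neg (fun hh => hne (congrArg Subtype.val hh))] at this
      exact this
    exact not_both (hS w (hBS hwB)).2 (hunit v) horth hcw ⟨rep v, hrep v, hqv⟩
  · intro ψ hψ χ hχ h hc
    exact not_both (hS ψ hψ).2 (hS χ hχ).2 h hc.1 hc.2

end KSAux

/-- every set of product unit vectors in `(ℂ²)^{⊗n}` admits a
KS-colouring; consequently, every KS set (a set of unit vectors admitting no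
KS-colouring) in `(ℂ²)^{⊗n}` contains at least one non-product (entangled) vector. -/
theorem multiqubit_KS_set_contains_entangled_ray (n : ℕ) (hn : 1 ≤ n) :
    (∀ S : Set (NQubit n), (∀ v ∈ S, IsProduct v ∧ ‖v‖ = 1) →
      ∃ c : NQubit n → Prop, IsKSColouring S c) ∧
    (∀ S : Set (NQubit n), (∀ v ∈ S, ‖v‖ = 1) →
      (¬ ∃ c : NQubit n → Prop, IsKSColouring S c) →
      ∃ v ∈ S, ¬ IsProduct v) := by
  refine ⟨KSAux.main n, ?_⟩
  intro S hu hno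
  by_contra h
  push_neg at h
  exact hno (KSAux.main n S fun v hv => ⟨h v hv, hu v hv⟩)

end
end

section
/- Multiplicity lemma for product bases: let P = {Ψⱼ ⊗ ψⱼ : 1 ≤ j ≤ 2^{m+1}} be an orthonormal basis of (ℂ²)^{⊗(m+1)} = (ℂ²)^{⊗m} ⊗ ℂ² in which each Ψⱼ ∈ (ℂ²)^{⊗m} is a product unit vector and each ψⱼ ∈ ℂ² is a unit vector. For a unit vector ψ ∈ ℂ², let μ(ψ) = #{ j : the ray of ψⱼ equals the ray of ψ }. Then: (a) μ(ψ) = μ(ψ^⊥) for every unit vector ψ ∈ ℂ², where ψ^⊥ is a unit vector orthogonal to ψ; and (b) if E is a maximal set of pairwise non-orthogonal rays among the rays of the ψⱼ (maximal in the sense that every ray of a ψⱼ not in E is orthogonal to some ray in E) and J = { j : the ray of ψⱼ belongs to E }, then |J| = 2^m and {Ψⱼ : j ∈ J} is an orthonormal basis of (ℂ²)^{⊗m}. -/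
open scoped InnerProductSpace
open MeasureTheory

noncomputable section

/-- The vector `Ψ ⊗ ψ` in `(ℂ²)^{⊗(m+1)} = (ℂ²)^{⊗m} ⊗ ℂ²`. -/
noncomputable def glue {m : ℕ} (Ψ : NQubit m) (ψ : Qubit) : NQubit (m + 1) :=
  WithLp.toLp 2 (fun f => Ψ (fun i => f i.castSucc) * ψ (f (Fin.last m)))

/-- Two nonzero qubit vectors span the same ray when they differ by a nonzero complex
scalar. -/
def SameRayC (a b : Qubit) : Prop := ∃ z : ℂ, z ≠ 0 ∧ b = z • a

section MultiplicityHelpers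

open scoped InnerProductSpace

lemma inner_glue' {m : ℕ} (Ψ Φ : NQubit m) (ψ χ : Qubit) :
    ⟪glue Ψ ψ, glue Φ χ⟫_ℂ = ⟪Ψ, Φ⟫_ℂ * ⟪ψ, χ⟫_ℂ := by
  have h : ∀ (a : Fin 2) (g : Fin m → Fin 2) (Θ : NQubit m) (θ : Qubit),
      glue Θ θ (Fin.snoc g a) = Θ g * θ a := by
    intro a g Θ θ
    have h1 : (fun i : Fin m => (Fin.snoc g a : Fin (m+1) → Fin 2) i.castSucc) = g := by
      funext i; simp
    show Θ (fun i => (Fin.snoc g a : Fin (m+1) → Fin 2) i.castSucc)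
        * θ ((Fin.snoc g a : Fin (m+1) → Fin 2) (Fin.last m)) = _
    rw [h1, Fin.snoc_last]
  simp only [PiLp.inner_apply, RCLike.inner_apply]
  rw [← Equiv.sum_comp (Fin.snocEquiv (fun _ => Fin 2))
    (fun f => glue Φ χ f * (starRingEnd ℂ) (glue Ψ ψ f))]
  rw [Fintype.sum_prod_type, Finset.sum_mul_sum, Finset.sum_comm]
  refine Finset.sum_congr rfl fun a _ => Finset.sum_congr rfl fun g _ => ?_
  have e : ((Fin.snocEquiv (fun _ => Fin 2)) (g, a)) = Fin.snoc a g := by funext i; rfl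
  rw [e, h, h, map_mul]
  ring

lemma norm_glue' {m : ℕ} (Ψ : NQubit m) (ψ : Qubit) : ‖glue Ψ ψ‖ = ‖Ψ‖ * ‖ψ‖ := by
  have h := inner_glue' Ψ Ψ ψ ψ
  rw [inner_self_eq_norm_sq_to_K, inner_self_eq_norm_sq_to_K, inner_self_eq_norm_sq_to_K] at h
  have h' : ‖glue Ψ ψ‖^2 = ‖Ψ‖^2 * ‖ψ‖^2 := by exact_mod_cast h
  nlinarith [norm_nonneg (glue Ψ ψ), norm_nonneg Ψ, norm_nonneg ψ,
    mul_nonneg (norm_nonneg Ψ) (norm_nonneg ψ)]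

lemma parseval' {ι E : Type*} [Fintype ι] [NormedAddCommGroup E] [InnerProductSpace ℂ E]
    (b : OrthonormalBasis ι ℂ E) (x : E) :
    ∑ i, ‖⟪b i, x⟫_ℂ‖^2 = ‖x‖^2 := by
  have h := b.sum_inner_mul_inner x x
  rw [inner_self_eq_norm_sq_to_K] at h
  have h2 : ∀ i, ⟪x, b i⟫_ℂ * ⟪b i, x⟫_ℂ = ((‖⟪b i, x⟫_ℂ‖^2 : ℝ) : ℂ) := by
    intro i
    rw [← inner_conj_symm x (b i), RCLike.conj_mul]
    norm_cast
  simp only [h2] at h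
  rw [← Complex.ofReal_inj]
  push_cast at h ⊢
  exact h

lemma SameRayC.rfl' (a : Qubit) : SameRayC a a := ⟨1, one_ne_zero, (one_smul _ _).symm⟩

lemma SameRayC.symm {a b : Qubit} (h : SameRayC a b) : SameRayC b a := by
  obtain ⟨z, hz, rfl⟩ := h
  exact ⟨z⁻¹, inv_ne_zero hz, by rw [smul_smul, inv_mul_cancel₀ hz, one_smul]⟩

lemma SameRayC.trans {a b c : Qubit} (h1 : SameRayC a b) (h2 : SameRayC b c) : SameRayC a c := by
  obtain ⟨z, hz, rfl⟩ := h1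
  obtain ⟨w, hw, rfl⟩ := h2
  exact ⟨w * z, mul_ne_zero hw hz, by rw [smul_smul]⟩

lemma inner_ne_zero_of_sameRayC {a b : Qubit} (ha : a ≠ 0) (h : SameRayC a b) :
    ⟪a, b⟫_ℂ ≠ 0 := by
  obtain ⟨z, hz, rfl⟩ := h
  rw [inner_smul_right]
  exact mul_ne_zero hz (fun hc => ha (inner_self_eq_zero.mp hc))

lemma inner_eq_zero_of_sameRayC {a b a' b' : Qubit} (ha : SameRayC a a') (hb : SameRayC b b')
    (h : ⟪a, b⟫_ℂ = 0) : ⟪a', b'⟫_ℂ = 0 := by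
  obtain ⟨z, hz, rfl⟩ := ha
  obtain ⟨w, hw, rfl⟩ := hb
  rw [inner_smul_right, inner_smul_left, h]
  ring

def qperp (χ : Qubit) : Qubit :=
  WithLp.toLp 2 (fun i : Fin 2 => if i = 0 then -(starRingEnd ℂ) (χ 1) else (starRingEnd ℂ) (χ 0))

lemma qperp_apply_zero (χ : Qubit) : qperp χ 0 = -(starRingEnd ℂ) (χ 1) := rfl
lemma qperp_apply_one (χ : Qubit) : qperp χ 1 = (starRingEnd ℂ) (χ 0) := rfl

lemma inner_qperp (χ : Qubit) : ⟪χ, qperp χ⟫_ℂ = 0 := by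
  simp only [PiLp.inner_apply, RCLike.inner_apply, Fin.sum_univ_two,
    qperp_apply_zero, qperp_apply_one]
  ring

lemma norm_qperp (χ : Qubit) : ‖qperp χ‖ = ‖χ‖ := by
  have h : ⟪qperp χ, qperp χ⟫_ℂ = ⟪χ, χ⟫_ℂ := by
    simp only [PiLp.inner_apply, RCLike.inner_apply, Fin.sum_univ_two,
      qperp_apply_zero, qperp_apply_one, map_neg, Complex.conj_conj]
    ring
  rw [inner_self_eq_norm_sq_to_K, inner_self_eq_norm_sq_to_K] at h
  have h' : ‖qperp χ‖^2 = ‖χ‖^2 := by exact_mod_cast h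
  nlinarith [norm_nonneg (qperp χ), norm_nonneg χ]

/-- an orthonormal pair of qubits is an orthonormal basis -/
noncomputable def onbPair (χ χp : Qubit) (hχ : ‖χ‖ = 1) (hχp : ‖χp‖ = 1)
    (hp : ⟪χ, χp⟫_ℂ = 0) : OrthonormalBasis (Fin 2) ℂ Qubit := by
  have hon : Orthonormal ℂ ![χ, χp] := by
    rw [orthonormal_iff_ite]
    have h1 : ⟪χ, χ⟫_ℂ = 1 := by
      rw [inner_self_eq_norm_sq_to_K, hχ]; norm_num
    have h2 : ⟪χp, χp⟫_ℂ = 1 := by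
      rw [inner_self_eq_norm_sq_to_K, hχp]; norm_num
    have h3 : ⟪χp, χ⟫_ℂ = 0 := by rw [← inner_conj_symm, hp, map_zero]
    intro i j
    fin_cases i <;> fin_cases j <;> simp [h1, h2, h3, hp, hχ, hχp]
  exact OrthonormalBasis.mk hon (by
    rw [hon.linearIndependent.span_eq_top_of_card_eq_finrank ?_]
    · simp [finrank_euclideanSpace]
    )

lemma onbPair_zero (χ χp : Qubit) (hχ hχp hp) : onbPair χ χp hχ hχp hp 0 = χ := by
  rw [onbPair, OrthonormalBasis.coe_mk]; rfl
lemma onbPair_one (χ χp : Qubit) (hχ hχp hp) : onbPair χ χp hχ hχp hp 1 = χp := by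
  rw [onbPair, OrthonormalBasis.coe_mk]; rfl

lemma pair_repr {χ χp : Qubit} (hχ : ‖χ‖ = 1) (hχp : ‖χp‖ = 1) (hp : ⟪χ, χp⟫_ℂ = 0)
    (v : Qubit) : ⟪χ, v⟫_ℂ • χ + ⟪χp, v⟫_ℂ • χp = v := by
  have h := (onbPair χ χp hχ hχp hp).sum_repr' v
  rwa [Fin.sum_univ_two, onbPair_zero, onbPair_one] at h

lemma pair_parseval {χ χp : Qubit} (hχ : ‖χ‖ = 1) (hχp : ‖χp‖ = 1) (hp : ⟪χ, χp⟫_ℂ = 0)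
    (v : Qubit) : ‖⟪χ, v⟫_ℂ‖^2 + ‖⟪χp, v⟫_ℂ‖^2 = ‖v‖^2 := by
  have h := parseval' (onbPair χ χp hχ hχp hp) v
  rwa [Fin.sum_univ_two, onbPair_zero, onbPair_one] at h

lemma sameRayC_iff {χ χp : Qubit} (hχ : ‖χ‖ = 1) (hχp : ‖χp‖ = 1) (hp : ⟪χ, χp⟫_ℂ = 0)
    {v : Qubit} (hv : ‖v‖ = 1) :
    SameRayC v χ ↔ ⟪χp, v⟫_ℂ = 0 := by
  constructor
  · rintro ⟨z, hz, hzv⟩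
    have h0 : ⟪χp, χ⟫_ℂ = 0 := by rw [← inner_conj_symm, hp, map_zero]
    have hvz : v = z⁻¹ • χ := by
      rw [hzv, smul_smul, inv_mul_cancel₀ hz, one_smul]
    rw [hvz, inner_smul_right, h0, mul_zero]
  · intro h0
    have hrepr := pair_repr hχ hχp hp v
    rw [h0, zero_smul, add_zero] at hrepr
    have hc : ⟪χ, v⟫_ℂ ≠ 0 := by
      intro hc
      rw [hc, zero_smul] at hrepr
      rw [← hrepr] at hv
      simp at hv
    exact ⟨(⟪χ, v⟫_ℂ)⁻¹, inv_ne_zero hc, ((inv_smul_eq_iff₀ hc).mpr hrepr.symm).symm⟩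

lemma norm_inner_of_sameRayC {χ χp : Qubit} (hχ : ‖χ‖ = 1) (hχp : ‖χp‖ = 1)
    (hp : ⟪χ, χp⟫_ℂ = 0) {v : Qubit} (hv : ‖v‖ = 1) (h : SameRayC v χ) :
    ‖⟪χ, v⟫_ℂ‖ = 1 := by
  have h0 := (sameRayC_iff hχ hχp hp hv).mp h
  have h1 := pair_parseval hχ hχp hp v
  rw [h0, hv] at h1
  simp only [norm_zero] at h1
  nlinarith [norm_nonneg ⟪χ, v⟫_ℂ]

lemma mem_span_of_sum_sq {ι H : Type*} [Fintype ι] [NormedAddCommGroup H]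
    [InnerProductSpace ℂ H] {v : ι → H} (hv : Orthonormal ℂ v) {x : H} (hx : ‖x‖ = 1)
    (hsum : ∑ i, ‖⟪v i, x⟫_ℂ‖^2 = 1) : x ∈ Submodule.span ℂ (Set.range v) := by
  set c : ι → ℂ := fun i => ⟪v i, x⟫_ℂ with hc
  set w : H := ∑ i, c i • v i with hw
  have hnormsum : ∑ i, (starRingEnd ℂ) (c i) * c i = 1 := by
    have h' : ∑ i, (starRingEnd ℂ) (c i) * c i = ((∑ i, ‖c i‖^2 : ℝ) : ℂ) := by
      push_cast
      exact Finset.sum_congr rfl fun i _ => by rw [RCLike.conj_mul]; norm_cast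
    rw [h', hsum]; norm_num
  have hxw : ⟪x, w⟫_ℂ = 1 := by
    rw [hw, inner_sum]
    simp only [inner_smul_right]
    rw [← hnormsum]
    refine Finset.sum_congr rfl fun i _ => ?_
    simp only [hc]
    rw [← inner_conj_symm x (v i)]
    ring
  have hwx : ⟪w, x⟫_ℂ = 1 := by
    rw [← inner_conj_symm, hxw, map_one]
  have hww : ⟪w, w⟫_ℂ = 1 := by
    rw [hw, hv.inner_sum]
    exact hnormsum
  have hxx : ⟪x, x⟫_ℂ = 1 := by
    rw [inner_self_eq_norm_sq_to_K, hx]; norm_num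
  have h0 : ⟪x - w, x - w⟫_ℂ = 0 := by
    rw [inner_sub_left, inner_sub_right, inner_sub_right, hxx, hxw, hwx, hww]
    ring
  have hxe : x = w := by
    have h1 := inner_self_eq_zero.mp h0
    rw [sub_eq_zero] at h1
    exact h1
  rw [hxe, hw]
  exact Submodule.sum_mem _ fun i _ =>
    Submodule.smul_mem _ _ (Submodule.subset_span (Set.mem_range_self i))

lemma card_le_of_orthonormal_mem_span {H : Type*} [NormedAddCommGroup H]
    [InnerProductSpace ℂ H] [FiniteDimensional ℂ H] {ι κ : Type*} [Fintype ι] [Fintype κ]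
    {u : ι → H} {v : κ → H} (hu : Orthonormal ℂ u)
    (hmem : ∀ i, u i ∈ Submodule.span ℂ (Set.range v)) :
    Fintype.card ι ≤ Fintype.card κ := by
  classical
  set W := Submodule.span ℂ (Set.range v) with hW
  have h1 : LinearIndependent ℂ (fun i => (⟨u i, hmem i⟩ : W)) := by
    apply LinearIndependent.of_comp W.subtype
    exact hu.linearIndependent
  have h2 : Fintype.card ι ≤ Module.finrank ℂ W := h1.fintype_card_le_finrank
  refine h2.trans ?_
  have h3 : Module.finrank ℂ W ≤ (Set.range v).toFinset.card := finrank_span_le_card _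
  refine h3.trans ?_
  rw [Set.toFinset_range]
  exact (Finset.card_image_le).trans (by simp)

lemma main_key {m : ℕ} {Ψ : Fin (2^(m+1)) → NQubit m} {ψ : Fin (2^(m+1)) → Qubit}
    (horth : Orthonormal ℂ (fun j => glue (Ψ j) (ψ j)))
    (hspan : Submodule.span ℂ (Set.range fun j => glue (Ψ j) (ψ j)) = ⊤)
    (Φ : NQubit m) (hΦ : ‖Φ‖ = 1) (χ : Qubit) (hχ : ‖χ‖ = 1) :
    ∑ j, ‖⟪Ψ j, Φ⟫_ℂ‖^2 * ‖⟪ψ j, χ⟫_ℂ‖^2 = 1 := by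
  have h := parseval' (OrthonormalBasis.mk horth hspan.ge) (glue Φ χ)
  simp only [OrthonormalBasis.coe_mk, inner_glue', norm_mul, mul_pow] at h
  rw [norm_glue', hΦ, hχ] at h
  simpa using h

lemma perp_of_unital {m : ℕ} {Ψ : Fin (2^(m+1)) → NQubit m} {ψ : Fin (2^(m+1)) → Qubit}
    (horth : Orthonormal ℂ (fun j => glue (Ψ j) (ψ j)))
    (hspan : Submodule.span ℂ (Set.range fun j => glue (Ψ j) (ψ j)) = ⊤)
    (hΨ : ∀ j, ‖Ψ j‖ = 1) (χ : Qubit) (hχ : ‖χ‖ = 1) (k : Fin (2^(m+1)))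
    (hk : ‖⟪ψ k, χ⟫_ℂ‖ = 1) :
    ∀ j, j ≠ k → ⟪ψ j, χ⟫_ℂ ≠ 0 → ⟪Ψ j, Ψ k⟫_ℂ = 0 := by
  have h := main_key horth hspan (Ψ k) (hΨ k) χ hχ
  have hkk : ‖⟪Ψ k, Ψ k⟫_ℂ‖^2 * ‖⟪ψ k, χ⟫_ℂ‖^2 = 1 := by
    rw [hk, inner_self_eq_norm_sq_to_K]
    simp [hΨ k]
  rw [← Finset.add_sum_erase _ _ (Finset.mem_univ k), hkk] at h
  have hrest : ∑ j ∈ Finset.univ.erase k, ‖⟪Ψ j, Ψ k⟫_ℂ‖^2 * ‖⟪ψ j, χ⟫_ℂ‖^2 = 0 := by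
    linarith
  intro j hj hinner
  have hj0 := (Finset.sum_eq_zero_iff_of_nonneg (fun i _ => by positivity)).mp hrest j
    (Finset.mem_erase.mpr ⟨hj, Finset.mem_univ j⟩)
  rcases mul_eq_zero.mp hj0 with h1 | h2
  · rw [pow_eq_zero_iff (by norm_num), norm_eq_zero] at h1
    exact h1
  · rw [pow_eq_zero_iff (by norm_num), norm_eq_zero] at h2
    exact absurd h2 hinner

lemma mu_le {m : ℕ} {Ψ : Fin (2^(m+1)) → NQubit m} {ψ : Fin (2^(m+1)) → Qubit}
    (hΨ : ∀ j, ‖Ψ j‖ = 1) (hψ : ∀ j, ‖ψ j‖ = 1)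
    (horth : Orthonormal ℂ (fun j => glue (Ψ j) (ψ j)))
    (hspan : Submodule.span ℂ (Set.range fun j => glue (Ψ j) (ψ j)) = ⊤)
    {χ χp : Qubit} (hχ : ‖χ‖ = 1) (hχp : ‖χp‖ = 1) (hp : ⟪χ, χp⟫_ℂ = 0) :
    Nat.card {j // SameRayC (ψ j) χ} ≤ Nat.card {j // SameRayC (ψ j) χp} := by
  classical
  have hp' : ⟪χp, χ⟫_ℂ = 0 := by rw [← inner_conj_symm, hp, map_zero]
  have hψne : ∀ j, ψ j ≠ 0 := fun j h0 => by
    have := hψ j; rw [h0] at this; simp at this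
  have hAiff : ∀ j, SameRayC (ψ j) χ ↔ ⟪χp, ψ j⟫_ℂ = 0 :=
    fun j => sameRayC_iff hχ hχp hp (hψ j)
  have hBiff : ∀ j, SameRayC (ψ j) χp ↔ ⟪χ, ψ j⟫_ℂ = 0 :=
    fun j => sameRayC_iff hχp hχ hp' (hψ j)
  have hglue : ∀ j k, j ≠ k → ⟪ψ j, ψ k⟫_ℂ ≠ 0 → ⟪Ψ j, Ψ k⟫_ℂ = 0 := by
    intro j k hjk hne
    have h := horth.2 hjk
    simp only [inner_glue'] at h
    exact (mul_eq_zero.mp h).resolve_right hne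
  have hBorth : Orthonormal ℂ (fun j : {j // SameRayC (ψ j) χp} => Ψ j) := by
    refine ⟨fun j => hΨ j, fun j k hjk => ?_⟩
    refine hglue j k (fun h => hjk (Subtype.ext h)) ?_
    exact inner_ne_zero_of_sameRayC (hψne j) (j.2.trans k.2.symm)
  have hAorth : Orthonormal ℂ (fun j : {j // SameRayC (ψ j) χ} => Ψ j) := by
    refine ⟨fun j => hΨ j, fun j k hjk => ?_⟩
    refine hglue j k (fun h => hjk (Subtype.ext h)) ?_
    exact inner_ne_zero_of_sameRayC (hψne j) (j.2.trans k.2.symm)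
  have hmem : ∀ k : {j // SameRayC (ψ j) χ},
      Ψ k ∈ Submodule.span ℂ (Set.range (fun j : {j // SameRayC (ψ j) χp} => Ψ j)) := by
    rintro ⟨k, hk⟩
    have hk1 : ‖⟪ψ k, χ⟫_ℂ‖ = 1 := by
      have h := norm_inner_of_sameRayC hχ hχp hp (hψ k) hk
      rwa [← inner_conj_symm, RCLike.norm_conj] at h
    have hperpk := perp_of_unital horth hspan hΨ χ hχ k hk1
    have h := main_key horth hspan (Ψ k) (hΨ k) χp hχp
    have hsum0 : ∑ j, ‖⟪Ψ j, Ψ k⟫_ℂ‖^2 * ‖⟪ψ j, χp⟫_ℂ‖^2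
        = ∑ j ∈ Finset.univ.filter (fun j => SameRayC (ψ j) χp), ‖⟪Ψ j, Ψ k⟫_ℂ‖^2 := by
      rw [Finset.sum_filter]
      refine Finset.sum_congr rfl fun j _ => ?_
      by_cases hj : SameRayC (ψ j) χp
      · rw [if_pos hj]
        have h1 : ‖⟪ψ j, χp⟫_ℂ‖ = 1 := by
          have h2 := norm_inner_of_sameRayC hχp hχ hp' (hψ j) hj
          rwa [← inner_conj_symm, RCLike.norm_conj] at h2
        rw [h1]; ring
      · rw [if_neg hj]
        by_cases hjk : j = k
        · subst hjk
          have h0 : ⟪ψ j, χp⟫_ℂ = 0 := by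
            rw [← inner_conj_symm, (hAiff j).mp hk, map_zero]
          rw [h0]; simp
        · have hne : ⟪ψ j, χ⟫_ℂ ≠ 0 := by
            intro h0
            exact hj ((hBiff j).mpr (by rw [← inner_conj_symm, h0, map_zero]))
          rw [hperpk j hjk hne]; simp
    have hsum : ∑ j : {j // SameRayC (ψ j) χp}, ‖⟪Ψ j, Ψ k⟫_ℂ‖^2 = 1 := by
      rw [← Finset.sum_subtype (Finset.univ.filter fun j => SameRayC (ψ j) χp)
        (fun x => by simp) (fun j => ‖⟪Ψ j, Ψ k⟫_ℂ‖^2), ← hsum0, h]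
    exact mem_span_of_sum_sq hBorth (hΨ k) hsum
  have hcard := card_le_of_orthonormal_mem_span hAorth hmem
  rw [Nat.card_eq_fintype_card, Nat.card_eq_fintype_card]
  exact hcard

lemma mu_eq {m : ℕ} {Ψ : Fin (2^(m+1)) → NQubit m} {ψ : Fin (2^(m+1)) → Qubit}
    (hΨ : ∀ j, ‖Ψ j‖ = 1) (hψ : ∀ j, ‖ψ j‖ = 1)
    (horth : Orthonormal ℂ (fun j => glue (Ψ j) (ψ j)))
    (hspan : Submodule.span ℂ (Set.range fun j => glue (Ψ j) (ψ j)) = ⊤)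
    {χ χp : Qubit} (hχ : ‖χ‖ = 1) (hχp : ‖χp‖ = 1) (hp : ⟪χ, χp⟫_ℂ = 0) :
    Nat.card {j // SameRayC (ψ j) χ} = Nat.card {j // SameRayC (ψ j) χp} := by
  have hp' : ⟪χp, χ⟫_ℂ = 0 := by rw [← inner_conj_symm, hp, map_zero]
  exact le_antisymm (mu_le hΨ hψ horth hspan hχ hχp hp)
    (mu_le hΨ hψ horth hspan hχp hχ hp')

end MultiplicityHelpers

/-- multiplicity lemma for product bases: if
`P = {Ψⱼ ⊗ ψⱼ : 1 ≤ j ≤ 2^(m+1)}` is an orthonormal basis of `(ℂ²)^{⊗(m+1)}` with each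
`Ψⱼ` a product unit vector of `(ℂ²)^{⊗m}` and each `ψⱼ` a unit qubit vector, and
`μ(ψ)` counts the `j` with ray of `ψⱼ` equal to the ray of `ψ`, then
(a) `μ(ψ) = μ(ψ^⊥)` for every unit `ψ` with unit `ψ^⊥ ⊥ ψ`; and
(b) for every maximal set `E` of pairwise non-orthogonal rays among the rays of the
`ψⱼ`, with `J = {j : ray of ψⱼ belongs to E}`, one has `|J| = 2^m` and
`{Ψⱼ : j ∈ J}` is an orthonormal basis of `(ℂ²)^{⊗m}`. -/
theorem product_basis_multiplicity_lemma
    (m : ℕ) (Ψ : Fin (2 ^ (m + 1)) → NQubit m) (ψ : Fin (2 ^ (m + 1)) → Qubit)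
    (hΨprod : ∀ j, IsProduct (Ψ j)) (hΨ : ∀ j, ‖Ψ j‖ = 1) (hψ : ∀ j, ‖ψ j‖ = 1)
    (horth : Orthonormal ℂ (fun j => glue (Ψ j) (ψ j)))
    (hspan : Submodule.span ℂ (Set.range fun j => glue (Ψ j) (ψ j)) = ⊤) :
    (∀ χ χp : Qubit, ‖χ‖ = 1 → ‖χp‖ = 1 → ⟪χ, χp⟫_ℂ = 0 →
      Nat.card {j // SameRayC (ψ j) χ} = Nat.card {j // SameRayC (ψ j) χp}) ∧
    (∀ E : Finset Qubit,
      (∀ e ∈ E, ∃ j, SameRayC (ψ j) e) →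
      (∀ e ∈ E, ∀ e' ∈ E, e ≠ e' → ¬ SameRayC e e' ∧ ⟪e, e'⟫_ℂ ≠ 0) →
      (∀ j, (¬ ∃ e ∈ E, SameRayC e (ψ j)) → ∃ e ∈ E, ⟪e, ψ j⟫_ℂ = 0) →
      ∀ J : Set (Fin (2 ^ (m + 1))), J = {j | ∃ e ∈ E, SameRayC e (ψ j)} →
        Nat.card J = 2 ^ m ∧
        Orthonormal ℂ (fun j : J => Ψ j) ∧
        Submodule.span ℂ (Ψ '' J) = ⊤) := by
  classical
  have hψne : ∀ j, ψ j ≠ 0 := fun j h0 => by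
    have := hψ j; rw [h0] at this; simp at this
  have hglue0 : ∀ j k, j ≠ k → ⟪ψ j, ψ k⟫_ℂ ≠ 0 → ⟪Ψ j, Ψ k⟫_ℂ = 0 := by
    intro j k hjk hne
    have h := horth.2 hjk
    simp only [inner_glue'] at h
    exact (mul_eq_zero.mp h).resolve_right hne
  constructor
  · intro χ χp hχ hχp hp
    exact mu_eq hΨ hψ horth hspan hχ hχp hp
  · intro E hE1 hE2 hE3 J hJ
    subst hJ
    set u : Qubit → Qubit :=
      fun e => if h : ∃ j, SameRayC (ψ j) e then ψ h.choose else 0 with hu_def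
    have hu : ∀ e ∈ E, ‖u e‖ = 1 ∧ SameRayC (u e) e := by
      intro e he
      have h := hE1 e he
      have hue : u e = ψ h.choose := dif_pos h
      rw [hue]
      exact ⟨hψ _, h.choose_spec⟩
    have hune : ∀ e ∈ E, u e ≠ 0 := fun e he h0 => by
      have := (hu e he).1; rw [h0] at this; simp at this
    have hqnorm : ∀ e ∈ E, ‖qperp (u e)‖ = 1 := by
      intro e he; rw [norm_qperp]; exact (hu e he).1
    have hIff1 : ∀ e ∈ E, ∀ j, SameRayC (ψ j) (u e) ↔ ⟪qperp (u e), ψ j⟫_ℂ = 0 :=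
      fun e he j => sameRayC_iff (hu e he).1 (hqnorm e he) (inner_qperp _) (hψ j)
    have hIff2 : ∀ e ∈ E, ∀ j, SameRayC (ψ j) (qperp (u e)) ↔ ⟪u e, ψ j⟫_ℂ = 0 := by
      intro e he j
      refine sameRayC_iff (hqnorm e he) (hu e he).1 ?_ (hψ j)
      rw [← inner_conj_symm, inner_qperp, map_zero]
    set F : Qubit → Finset (Fin (2^(m+1))) :=
      fun e => Finset.univ.filter (fun j => SameRayC (ψ j) (u e)) with hF
    set G : Qubit → Finset (Fin (2^(m+1))) :=
      fun e => Finset.univ.filter (fun j => SameRayC (ψ j) (qperp (u e))) with hG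
    set SJ : Finset (Fin (2^(m+1))) :=
      Finset.univ.filter (fun j => ∃ e ∈ E, SameRayC e (ψ j)) with hSJ
    have hSJ_eq : SJ = E.biUnion F := by
      ext j
      simp only [hSJ, hF, Finset.mem_filter, Finset.mem_univ, true_and, Finset.mem_biUnion]
      constructor
      · rintro ⟨e, he, hsr⟩
        exact ⟨e, he, hsr.symm.trans (hu e he).2.symm⟩
      · rintro ⟨e, he, hsr⟩
        exact ⟨e, he, (hu e he).2.symm.trans hsr.symm⟩
    have hdisjF : ∀ e ∈ E, ∀ e' ∈ E, e ≠ e' → Disjoint (F e) (F e') := by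
      intro e he e' he' hne
      rw [Finset.disjoint_left]
      intro j hj hj'
      simp only [hF, Finset.mem_filter, Finset.mem_univ, true_and] at hj hj'
      exact (hE2 e he e' he' hne).1
        ((((hu e he).2.symm.trans hj.symm).trans hj').trans (hu e' he').2)
    have hqq : ∀ e ∈ E, ∀ e' ∈ E, SameRayC (qperp (u e)) (qperp (u e')) → SameRayC e e' := by
      intro e he e' he' hsr
      have h0 : ⟪qperp (u e), u e⟫_ℂ = 0 := by
        rw [← inner_conj_symm, inner_qperp, map_zero]
      have h1 : ⟪qperp (u e'), u e⟫_ℂ = 0 :=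
        inner_eq_zero_of_sameRayC hsr (SameRayC.rfl' _) h0
      have h2 : SameRayC (u e) (u e') :=
        (sameRayC_iff (hu e' he').1 (hqnorm e' he') (inner_qperp _) (hu e he).1).mpr h1
      exact (((hu e he).2.symm.trans h2).trans (hu e' he').2)
    have hdisjG : ∀ e ∈ E, ∀ e' ∈ E, e ≠ e' → Disjoint (G e) (G e') := by
      intro e he e' he' hne
      rw [Finset.disjoint_left]
      intro j hj hj'
      simp only [hG, Finset.mem_filter, Finset.mem_univ, true_and] at hj hj'
      exact (hE2 e he e' he' hne).1 (hqq e he e' he' (hj.symm.trans hj'))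
    have hcompl : Finset.univ \ SJ = E.biUnion G := by
      ext j
      simp only [Finset.mem_sdiff, Finset.mem_univ, true_and, Finset.mem_biUnion, hSJ, hG,
        Finset.mem_filter]
      constructor
      · intro hnj
        obtain ⟨e, he, hperp⟩ := hE3 j (by simpa using hnj)
        have h1 : ⟪u e, ψ j⟫_ℂ = 0 :=
          inner_eq_zero_of_sameRayC (hu e he).2.symm (SameRayC.rfl' _) hperp
        exact ⟨e, he, (hIff2 e he j).mpr h1⟩
      · rintro ⟨e, he, hj⟩
        rintro ⟨e', he', hsr⟩
        have h1 : ⟪u e, ψ j⟫_ℂ = 0 := (hIff2 e he j).mp hj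
        by_cases hee : e' = e
        · subst hee
          exact inner_ne_zero_of_sameRayC (hune e' he') ((hu e' he').2.trans hsr) h1
        · exact (hE2 e he e' he' (fun h => hee h.symm)).2
            (inner_eq_zero_of_sameRayC (hu e he).2 hsr.symm h1)
    have hcardFG : ∀ e ∈ E, (F e).card = (G e).card := by
      intro e he
      have h := mu_eq hΨ hψ horth hspan (hu e he).1 (hqnorm e he) (inner_qperp (u e))
      rwa [Nat.card_eq_fintype_card, Nat.card_eq_fintype_card, Fintype.card_subtype,
        Fintype.card_subtype] at h
    have hSJcard : SJ.card = (Finset.univ \ SJ).card := by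
      rw [hcompl, hSJ_eq, Finset.card_biUnion (fun e he e' he' hne => hdisjF e he e' he' hne),
        Finset.card_biUnion (fun e he e' he' hne => hdisjG e he e' he' hne)]
      exact Finset.sum_congr rfl fun e he => hcardFG e he
    have htot : SJ.card + (Finset.univ \ SJ).card = 2^(m+1) := by
      rw [Finset.card_sdiff_of_subset (Finset.subset_univ _)]
      have h := Finset.card_le_card (Finset.subset_univ SJ)
      simp only [Finset.card_univ, Fintype.card_fin] at h ⊢
      omega
    have hSJ2 : SJ.card = 2^m := by
      rw [← hSJcard] at htot
      have h2 : 2^(m+1) = 2^m + 2^m := by ring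
      omega
    set J : Set (Fin (2^(m+1))) := {j | ∃ e ∈ E, SameRayC e (ψ j)} with hJ
    have hJSJ : J = ↑SJ := by
      ext j; simp [hJ, hSJ]
    have hNcard : Nat.card J = 2^m := by
      rw [hJSJ, Nat.card_coe_set_eq, Set.ncard_coe_finset, hSJ2]
    have hJorth : Orthonormal ℂ (fun j : J => Ψ j) := by
      refine ⟨fun j => hΨ j, fun j k hjk => ?_⟩
      obtain ⟨e, he, hsr⟩ := j.2
      obtain ⟨e', he', hsr'⟩ := k.2
      refine hglue0 _ _ (fun h => hjk (Subtype.ext h)) ?_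
      by_cases hee : e = e'
      · subst hee
        exact inner_ne_zero_of_sameRayC (hψne _) (hsr.symm.trans hsr')
      · intro h0
        exact (hE2 e he e' he' hee).2 (inner_eq_zero_of_sameRayC hsr.symm hsr'.symm h0)
    haveI : Fintype ↥J := Set.Finite.fintype (Set.toFinite J)
    have hfr : Module.finrank ℂ (NQubit m) = 2^m := by
      rw [finrank_euclideanSpace]
      simp [Fintype.card_fun]
    have hcardJ : Fintype.card ↥J = 2^m := by
      rw [← Nat.card_eq_fintype_card]
      exact hNcard
    haveI : Nonempty ↥J := by
      rw [← Fintype.card_pos_iff, hcardJ]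
      positivity
    have hspanJ : Submodule.span ℂ (Set.range fun j : J => Ψ j) = ⊤ :=
      hJorth.linearIndependent.span_eq_top_of_card_eq_finrank (by rw [hcardJ, hfr])
    refine ⟨hNcard, hJorth, ?_⟩
    rw [Set.image_eq_range]
    exact hspanJ

end
end
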